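/- If (A,S,P) is a 𝔓-contraction on a complex Hilbert space H, then (A, S/2) is a 𝔹₂-contraction. -/

import Mathlib

open ContinuousLinearMap

noncomputable section

/-- The operator norm of a 2×2 complex matrix, acting on ℂ² with the Euclidean norm. -/
noncomputable def matOpNorm (M : Matrix (Fin 2) (Fin 2) ℂ) : ℝ :=
  ‖Matrix.toEuclideanCLM (𝕜 := ℂ) M‖

/-- The closed pentablock 𝔓̄ ⊆ ℂ³ : the set of (a₂₁, tr A₀, det A₀) over 2×2 matrices A₀
of operator norm at most 1. -/
def pentablock : Set (ℂ × ℂ × ℂ) :=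
  {x | ∃ M : Matrix (Fin 2) (Fin 2) ℂ, matOpNorm M ≤ 1 ∧ x = (M 1 0, M.trace, M.det)}

/-- The closed biball 𝔹̄₂ ⊆ ℂ². -/
def closedBiball : Set (ℂ × ℂ) :=
  {z | ‖z.1‖ ^ 2 + ‖z.2‖ ^ 2 ≤ 1}

/-- sup of |f| over a subset of ℂ³, for a polynomial f in three variables. -/
noncomputable def supAbs3 (X : Set (ℂ × ℂ × ℂ)) (f : MvPolynomial (Fin 3) ℂ) : ℝ :=
  sSup ((fun z : ℂ × ℂ × ℂ => ‖MvPolynomial.eval ![z.1, z.2.1, z.2.2] f‖) '' X)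

/-- sup of |g| over a subset of ℂ², for a polynomial g in two variables. -/
noncomputable def supAbs2 (X : Set (ℂ × ℂ)) (g : MvPolynomial (Fin 2) ℂ) : ℝ :=
  sSup ((fun z : ℂ × ℂ => ‖MvPolynomial.eval ![z.1, z.2] g‖) '' X)

lemma col_bound (M : Matrix (Fin 2) (Fin 2) ℂ) (hM : matOpNorm M ≤ 1) (j : Fin 2) :
    ‖M 0 j‖ ^ 2 + ‖M 1 j‖ ^ 2 ≤ 1 := by
  set T := Matrix.toEuclideanCLM (𝕜 := ℂ) M with hT
  have h1 : ‖T (EuclideanSpace.single j (1:ℂ))‖ ≤ 1 := by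
    calc ‖T (EuclideanSpace.single j (1:ℂ))‖ ≤ ‖T‖ * ‖EuclideanSpace.single j (1:ℂ)‖ :=
          T.le_opNorm _
    _ ≤ 1 := by
        rw [EuclideanSpace.norm_single, norm_one, mul_one]; exact hM
  have h2 : ∀ i, T (EuclideanSpace.single j (1:ℂ)) i = M i j := by
    intro i
    have := Matrix.ofLp_toEuclideanCLM (𝕜 := ℂ) M (EuclideanSpace.single j (1:ℂ))
    have h3 : (WithLp.equiv 2 _) (T (EuclideanSpace.single j (1:ℂ))) i
        = Matrix.toLin' M ((WithLp.equiv 2 _) (EuclideanSpace.single j (1:ℂ))) i := by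
      exact congrFun this i
    simpa [Matrix.toLin'_apply, Matrix.mulVec_single] using h3
  have h4 : ‖T (EuclideanSpace.single j (1:ℂ))‖ ^ 2 = ‖M 0 j‖^2 + ‖M 1 j‖^2 := by
    rw [EuclideanSpace.norm_eq, Real.sq_sqrt (by positivity)]
    simp [h2, Fin.sum_univ_two]
  nlinarith [norm_nonneg (T (EuclideanSpace.single j (1:ℂ)))]

set_option synthInstance.maxHeartbeats 1000000 in
lemma row_bound (M : Matrix (Fin 2) (Fin 2) ℂ) (hM : matOpNorm M ≤ 1) :
    ‖M 1 0‖ ^ 2 + ‖M 1 1‖ ^ 2 ≤ 1 := by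
  have hs : matOpNorm (star M) ≤ 1 := by
    unfold matOpNorm at hM ⊢
    rw [map_star]
    rw [ContinuousLinearMap.star_eq_adjoint]
    exact le_trans (le_of_eq (LinearIsometryEquiv.norm_map ContinuousLinearMap.adjoint _)) hM
  have h := col_bound (star M) hs 1
  simpa [Matrix.star_eq_conjTranspose, Matrix.conjTranspose_apply] using h

lemma mem_biball (M : Matrix (Fin 2) (Fin 2) ℂ) (hM : matOpNorm M ≤ 1) :
    ((M 1 0, (2:ℂ)⁻¹ * M.trace)) ∈ closedBiball := by
  have hc := col_bound M hM 0
  have hr := row_bound M hM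
  have h3 : ‖M.trace‖ ≤ ‖M 0 0‖ + ‖M 1 1‖ := by
    rw [Matrix.trace_fin_two]; exact norm_add_le _ _
  have h4 : ‖M.trace‖ ^ 2 ≤ (‖M 0 0‖ + ‖M 1 1‖) ^ 2 :=
    pow_le_pow_left₀ (norm_nonneg _) h3 2
  have h2 : ‖(2:ℂ)⁻¹ * M.trace‖ = 2⁻¹ * ‖M.trace‖ := by
    rw [norm_mul]; norm_num
  show ‖M 1 0‖ ^ 2 + ‖(2:ℂ)⁻¹ * M.trace‖ ^ 2 ≤ 1
  rw [h2]
  nlinarith [sq_nonneg (‖M 0 0‖ - ‖M 1 1‖), norm_nonneg M.trace]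

lemma biball_compact : IsCompact closedBiball := by
  have hclosed : IsClosed closedBiball := by
    have : Continuous fun z : ℂ × ℂ => ‖z.1‖ ^ 2 + ‖z.2‖ ^ 2 := by fun_prop
    exact isClosed_le this continuous_const
  have hsub : closedBiball ⊆ Metric.closedBall 0 1 := by
    intro z hz
    have hz' : ‖z.1‖ ^ 2 + ‖z.2‖ ^ 2 ≤ 1 := hz
    have h1 : ‖z.1‖ ≤ 1 := by nlinarith [norm_nonneg z.1, norm_nonneg z.2, hz']
    have h2 : ‖z.2‖ ≤ 1 := by nlinarith [norm_nonneg z.1, norm_nonneg z.2, hz']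
    rw [Metric.mem_closedBall, dist_zero_right, Prod.norm_def]
    exact max_le h1 h2
  exact Metric.isCompact_of_isClosed_isBounded hclosed
    (Metric.isBounded_closedBall.subset hsub)

variable {H : Type*} [NormedAddCommGroup H] [InnerProductSpace ℂ H]

/-- Evaluation f(A,S,P) of a three-variable polynomial at a commuting triple of operators. -/
noncomputable def opEval3 (A S P : H →L[ℂ] H) (f : MvPolynomial (Fin 3) ℂ) : H →L[ℂ] H :=
  ∑ m ∈ f.support, f.coeff m • (A ^ m 0 * S ^ m 1 * P ^ m 2)

/-- Evaluation g(S,P) of a two-variable polynomial at a commuting pair of operators. -/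
noncomputable def opEval2 (S P : H →L[ℂ] H) (g : MvPolynomial (Fin 2) ℂ) : H →L[ℂ] H :=
  ∑ m ∈ g.support, g.coeff m • (S ^ m 0 * P ^ m 1)

/-- A commuting triple (A,S,P) is a 𝔓-contraction if the von Neumann inequality over the
closed pentablock holds for every polynomial in three variables. -/
def IsPContraction (A S P : H →L[ℂ] H) : Prop :=
  Commute A S ∧ Commute A P ∧ Commute S P ∧
    ∀ f : MvPolynomial (Fin 3) ℂ, ‖opEval3 A S P f‖ ≤ supAbs3 pentablock f

/-- A commuting pair is a 𝔹₂-contraction if the von Neumann inequality over the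
closed biball holds for every polynomial in two variables. -/
def IsB2Contraction (A B : H →L[ℂ] H) : Prop :=
  Commute A B ∧
    ∀ g : MvPolynomial (Fin 2) ℂ, ‖opEval2 A B g‖ ≤ supAbs2 closedBiball g

lemma opEval3_monomial (A S P : H →L[ℂ] H) (m : Fin 3 →₀ ℕ) (c : ℂ) :
    opEval3 A S P (MvPolynomial.monomial m c) = c • (A ^ m 0 * S ^ m 1 * P ^ m 2) := by
  unfold opEval3
  rcases eq_or_ne c 0 with rfl | hc
  · simp
  · rw [MvPolynomial.support_monomial, if_neg hc, Finset.sum_singleton]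
    simp [MvPolynomial.coeff_monomial]

lemma opEval3_eq_of_subset (A S P : H →L[ℂ] H) (f : MvPolynomial (Fin 3) ℂ)
    (t : Finset (Fin 3 →₀ ℕ)) (ht : f.support ⊆ t) :
    opEval3 A S P f = ∑ m ∈ t, f.coeff m • (A ^ m 0 * S ^ m 1 * P ^ m 2) := by
  unfold opEval3
  exact Finset.sum_subset ht fun m _ hm => by
    rw [MvPolynomial.notMem_support_iff.mp hm, zero_smul]

lemma opEval3_add (A S P : H →L[ℂ] H) (p q : MvPolynomial (Fin 3) ℂ) :
    opEval3 A S P (p + q) = opEval3 A S P p + opEval3 A S P q := by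
  rw [opEval3_eq_of_subset A S P (p + q) (p.support ∪ q.support)
      (MvPolynomial.support_add),
    opEval3_eq_of_subset A S P p (p.support ∪ q.support) Finset.subset_union_left,
    opEval3_eq_of_subset A S P q (p.support ∪ q.support) Finset.subset_union_right,
    ← Finset.sum_add_distrib]
  exact Finset.sum_congr rfl fun m _ => by rw [MvPolynomial.coeff_add, add_smul]

lemma opEval3_sum {ι : Type*} (A S P : H →L[ℂ] H) (t : Finset ι)
    (F : ι → MvPolynomial (Fin 3) ℂ) :
    opEval3 A S P (∑ i ∈ t, F i) = ∑ i ∈ t, opEval3 A S P (F i) := by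
  induction t using Finset.cons_induction with
  | empty => simp [opEval3]
  | cons a t ha ih => rw [Finset.sum_cons, opEval3_add, ih, Finset.sum_cons]


lemma bdd_biball (g : MvPolynomial (Fin 2) ℂ) :
    BddAbove ((fun z : ℂ × ℂ => ‖MvPolynomial.eval ![z.1, z.2] g‖) '' closedBiball) := by
  have hvec : Continuous fun z : ℂ × ℂ => ![z.1, z.2] := by
    apply continuous_pi
    intro i
    fin_cases i
    · simpa using continuous_fst
    · simpa using continuous_snd
  have hcont : Continuous fun z : ℂ × ℂ => ‖MvPolynomial.eval ![z.1, z.2] g‖ :=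
    continuous_norm.comp ((MvPolynomial.continuous_eval g).comp hvec)
  exact (biball_compact.image hcont).bddAbove

theorem stmt7 {H : Type*} [NormedAddCommGroup H] [InnerProductSpace ℂ H] [CompleteSpace H]
    (A S P : H →L[ℂ] H) (h : IsPContraction A S P) :
    IsB2Contraction A (((2 : ℂ)⁻¹) • S) := by
  obtain ⟨hAS, hAP, hSP, hvN⟩ := h
  refine ⟨hAS.smul_right _, fun g => ?_⟩
  set f : MvPolynomial (Fin 3) ℂ := ∑ m ∈ g.support,
      MvPolynomial.monomial
        (Finsupp.single (0 : Fin 3) (m 0) + Finsupp.single (1 : Fin 3) (m 1))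
        (g.coeff m * (2 : ℂ)⁻¹ ^ m 1) with hf
  have hop : opEval2 A (((2 : ℂ)⁻¹) • S) g = opEval3 A S P f := by
    rw [hf, opEval3_sum]
    unfold opEval2
    refine Finset.sum_congr rfl fun m _ => ?_
    rw [opEval3_monomial]
    have e0 : (Finsupp.single (0 : Fin 3) (m 0) + Finsupp.single (1 : Fin 3) (m 1)) 0 = m 0 := by
      simp [Finsupp.single_apply]
    have e1 : (Finsupp.single (0 : Fin 3) (m 0) + Finsupp.single (1 : Fin 3) (m 1)) 1 = m 1 := by
      simp [Finsupp.single_apply]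
    have e2 : (Finsupp.single (0 : Fin 3) (m 0) + Finsupp.single (1 : Fin 3) (m 1)) 2 = 0 := by
      simp [Finsupp.single_apply]
    rw [e0, e1, e2, pow_zero, mul_one, smul_pow, mul_smul_comm, smul_smul]
  have heval : ∀ z1 z2 : ℂ, ∀ z3 : ℂ,
      MvPolynomial.eval ![z1, z2, z3] f = MvPolynomial.eval ![z1, (2 : ℂ)⁻¹ * z2] g := by
    intro z1 z2 z3
    rw [hf, map_sum, MvPolynomial.eval_eq']
    refine Finset.sum_congr rfl fun m _ => ?_
    rw [MvPolynomial.eval_monomial]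
    rw [Finsupp.prod_add_index (fun i _ => pow_zero _) (fun i _ k1 k2 => pow_add _ _ _)]
    rw [Finsupp.prod_single_index (h := fun i k => ![z1, z2, z3] i ^ k) (pow_zero _),
      Finsupp.prod_single_index (h := fun i k => ![z1, z2, z3] i ^ k) (pow_zero _)]
    rw [Fin.prod_univ_two]
    simp only [Matrix.cons_val_zero, Matrix.cons_val_one, Matrix.head_cons]
    rw [mul_pow]
    ring
  have hnonneg : (0 : ℝ) ≤ supAbs2 closedBiball g := by
    have hmem : ((0 : ℂ), (0 : ℂ)) ∈ closedBiball := by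
      show ‖(0:ℂ)‖ ^ 2 + ‖(0:ℂ)‖ ^ 2 ≤ 1; norm_num
    exact le_trans (norm_nonneg _)
      (le_csSup (bdd_biball g) ⟨((0 : ℂ), (0 : ℂ)), hmem, rfl⟩)
  have hsup : supAbs3 pentablock f ≤ supAbs2 closedBiball g := by
    apply Real.sSup_le _ hnonneg
    rintro x ⟨z, ⟨M, hM, rfl⟩, rfl⟩
    simp only
    rw [heval]
    exact le_csSup (bdd_biball g) ⟨(M 1 0, (2 : ℂ)⁻¹ * M.trace), mem_biball M hM, rfl⟩
  calc ‖opEval2 A (((2 : ℂ)⁻¹) • S) g‖ = ‖opEval3 A S P f‖ := by rw [hop]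
  _ ≤ supAbs3 pentablock f := hvN f
  _ ≤ supAbs2 closedBiball g := hsup
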